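/- Let d ≥ 1 be an integer, α > 0, γ > 0, 0 < r < 1, C > 0 and κ > 0. Let χ : (0,∞) → [0,∞) satisfy χ(x) ≤ C x^{−dα} for all x > 0, and let (λ_k)_{k≥1} be positive reals with λ_k ≥ κ k^{2/d} for all k ≥ 1. Set h_j := r^j and define c'_k² := Σ_{j≥1} h_j^{2dα+2γ} χ(h_j² λ_k). Then there exists C' > 0 such that c'_k² ≤ C' k^{−2α} for all k ≥ 1; in particular c'_k = O(k^{−α}). -/

import Mathlib

/-- Coefficient estimate: if `χ(x) ≤ C x^{-dα}`, `λ_k ≥ κ k^{2/d}` and `h_j = r^j` with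
`0 < r < 1`, then `c'_k² := Σ_{j≥1} h_j^{2dα+2γ} χ(h_j² λ_k) = O(k^{-2α})`. -/
theorem stmt_4 (d : ℕ) (hd : 1 ≤ d) (α γ r C κ : ℝ)
    (hα : 0 < α) (hγ : 0 < γ) (hr0 : 0 < r) (hr1 : r < 1) (hC : 0 < C) (hκ : 0 < κ)
    (χ : ℝ → ℝ) (hχ0 : ∀ x : ℝ, 0 < x → 0 ≤ χ x)
    (hχ : ∀ x : ℝ, 0 < x → χ x ≤ C * x ^ (-((d : ℝ) * α)))
    (lam : ℕ → ℝ) (hlampos : ∀ k : ℕ, 1 ≤ k → 0 < lam k)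
    (hlam : ∀ k : ℕ, 1 ≤ k → κ * (k : ℝ) ^ (2 / (d : ℝ)) ≤ lam k) :
    ∃ C' : ℝ, 0 < C' ∧ ∀ k : ℕ, 1 ≤ k →
      (∑' j : ℕ, (r ^ (j + 1)) ^ (2 * (d : ℝ) * α + 2 * γ) * χ ((r ^ (j + 1)) ^ 2 * lam k))
        ≤ C' * (k : ℝ) ^ (-2 * α) := by
  have hd0 : (0:ℝ) < d := by exact_mod_cast Nat.lt_of_lt_of_le Nat.zero_lt_one hd
  set ρ := r ^ (2*γ) with hρdef
  have hρ0 : 0 < ρ := Real.rpow_pos_of_pos hr0 _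
  have hρ1 : ρ < 1 := Real.rpow_lt_one hr0.le hr1 (by positivity)
  have h1ρ : 0 < 1 - ρ := by linarith
  refine ⟨C * κ ^ (-((d:ℝ)*α)) * (ρ * (1-ρ)⁻¹),
    mul_pos (mul_pos hC (Real.rpow_pos_of_pos hκ _)) (mul_pos hρ0 (inv_pos.2 h1ρ)), ?_⟩
  intro k hk
  have hkpos : (0:ℝ) < k := by exact_mod_cast hk
  set L := lam k with hLdef
  have hLpos : 0 < L := hlampos k hk
  have key : ∀ j : ℕ, (r ^ (j+1)) ^ (2*(d:ℝ)*α + 2*γ) * χ ((r ^ (j+1))^2 * L)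
      ≤ (C * L ^ (-((d:ℝ)*α))) * ρ ^ (j+1) := by
    intro j
    have hh : 0 < r ^ (j+1) := pow_pos hr0 _
    have hx : 0 < (r ^ (j+1))^2 * L := by positivity
    have h2 : (r ^ (j+1)) ^ (2*(d:ℝ)*α + 2*γ) * χ ((r ^ (j+1))^2 * L)
        ≤ (r ^ (j+1)) ^ (2*(d:ℝ)*α + 2*γ) * (C * ((r ^ (j+1))^2 * L) ^ (-((d:ℝ)*α))) :=
      mul_le_mul_of_nonneg_left (hχ _ hx) (Real.rpow_nonneg hh.le _)
    refine h2.trans_eq ?_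
    rw [Real.mul_rpow (by positivity) hLpos.le]
    have e1 : (((r ^ (j+1))^2 : ℝ)) ^ (-((d:ℝ)*α)) = (r ^ (j+1)) ^ (-(2*(d:ℝ)*α)) := by
      rw [← Real.rpow_natCast (r ^ (j+1)) 2, ← Real.rpow_mul hh.le]
      norm_num
      ring_nf
    rw [e1]
    have e2 : (r ^ (j+1)) ^ (2*(d:ℝ)*α + 2*γ) * (r ^ (j+1)) ^ (-(2*(d:ℝ)*α)) = ρ ^ (j+1) := by
      rw [← Real.rpow_add hh]
      have : 2*(d:ℝ)*α + 2*γ + -(2*(d:ℝ)*α) = 2*γ := by ring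
      rw [this, hρdef, ← Real.rpow_natCast (r ^ (2*γ)) (j+1),
        ← Real.rpow_natCast r (j+1), ← Real.rpow_mul hr0.le, ← Real.rpow_mul hr0.le]
      ring_nf
    rw [← e2]; ring
  have hgsum : Summable (fun j : ℕ => (C * L ^ (-((d:ℝ)*α))) * ρ ^ (j+1)) := by
    have : Summable (fun j : ℕ => ρ ^ j) := summable_geometric_of_lt_one hρ0.le hρ1
    simpa [pow_succ, mul_assoc, mul_comm, mul_left_comm] using (this.mul_right ρ).mul_left (C * L ^ (-((d:ℝ)*α)))
  have hfsum : Summable (fun j : ℕ => (r ^ (j+1)) ^ (2*(d:ℝ)*α + 2*γ) * χ ((r ^ (j+1))^2 * L)) := by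
    refine Summable.of_nonneg_of_le (fun j => ?_) key hgsum
    have hh : 0 < r ^ (j+1) := pow_pos hr0 _
    exact mul_nonneg (Real.rpow_nonneg hh.le _) (hχ0 _ (by positivity))
  have hts : (∑' j : ℕ, (r ^ (j+1)) ^ (2*(d:ℝ)*α + 2*γ) * χ ((r ^ (j+1))^2 * L))
      ≤ (C * L ^ (-((d:ℝ)*α))) * (ρ * (1-ρ)⁻¹) := by
    refine (Summable.tsum_le_tsum key hfsum hgsum).trans_eq ?_
    rw [tsum_mul_left]
    have h3 : (∑' j : ℕ, ρ ^ (j+1)) = ρ * (1-ρ)⁻¹ := by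
      calc (∑' j : ℕ, ρ ^ (j+1)) = ∑' j : ℕ, ρ ^ j * ρ := by
            simp [pow_succ]
        _ = (1-ρ)⁻¹ * ρ := by
            rw [tsum_mul_right, tsum_geometric_of_lt_one hρ0.le hρ1]
        _ = ρ * (1-ρ)⁻¹ := by ring
    rw [h3]
  refine hts.trans ?_
  have hLbd : L ^ (-((d:ℝ)*α)) ≤ κ ^ (-((d:ℝ)*α)) * (k:ℝ) ^ (-2*α) := by
    have h1 : L ^ (-((d:ℝ)*α)) ≤ (κ * (k:ℝ) ^ (2/(d:ℝ))) ^ (-((d:ℝ)*α)) :=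
      Real.rpow_le_rpow_of_nonpos (by positivity) (hlam k hk) (neg_nonpos.2 (by positivity))
    refine h1.trans_eq ?_
    rw [Real.mul_rpow hκ.le (by positivity), ← Real.rpow_mul hkpos.le]
    have hdne : (d:ℝ) ≠ 0 := hd0.ne'
    have hde : (2/(d:ℝ)) * (-((d:ℝ)*α)) = -2*α := by field_simp
    rw [hde]
  calc (C * L ^ (-((d:ℝ)*α))) * (ρ * (1-ρ)⁻¹)
      ≤ (C * (κ ^ (-((d:ℝ)*α)) * (k:ℝ) ^ (-2*α))) * (ρ * (1-ρ)⁻¹) := by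
        have : (0:ℝ) ≤ ρ * (1-ρ)⁻¹ := (mul_pos hρ0 (inv_pos.2 h1ρ)).le
        exact mul_le_mul_of_nonneg_right (mul_le_mul_of_nonneg_left hLbd hC.le) this
    _ = C * κ ^ (-((d:ℝ)*α)) * (ρ * (1-ρ)⁻¹) * (k:ℝ) ^ (-2*α) := by ring
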